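/- Let m be a map from subsets of 𝕋 to [0,∞] that is monotone (S₁ ⊆ S₂ implies m(S₁) ≤ m(S₂)), finitely subadditive (m(S₁ ∪ S₂) ≤ m(S₁) + m(S₂)), and translation-invariant (m(S + t) = m(S) for all t ∈ 𝕋). Let Φ be a cellular automaton on 𝒜^{ℤ^D} with neighbourhood 𝔅 ⊆ {−R,…,R}^D, and set C = (2R+1)^D. For a partition 𝒫 = {P_a}_{a∈𝒜} write ∂𝒫 = ⋃_{a∈𝒜} ∂P_a (topological boundaries). Then for every 𝒜-labelled open partition 𝒫 of 𝕋 and every n ≥ 1, m(∂(Φ̂^n(𝒫))) ≤ C · n^D · m(∂𝒫), where Φ̂^n denotes the n-fold iterate of the induced map Φ̂ on partitions. -/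

import Mathlib

open MeasureTheory Filter Topology
open scoped ENNReal

noncomputable section

/-- The `K`-dimensional torus `𝕋 = (ℝ/ℤ)^K`, with its (sup) quotient metric `d`
and Haar (Lebesgue) probability measure `volume`. -/
abbrev Torus (K : ℕ) := Fin K → AddCircle (1 : ℝ)

/-- The lattice `𝕃 = ℤ^D`. -/
abbrev Zd (D : ℕ) := Fin D → ℤ

/-- The box `𝔹(N) = {-N,…,N-1}^D ⊆ ℤ^D`. -/
def box (D N : ℕ) : Finset (Zd D) :=
  Fintype.piFinset fun _ => Finset.Ico (-(N : ℤ)) (N : ℤ)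

open Classical in
/-- `#(J ∩ 𝔹(N)) / (2N)^D`. -/
def densSeq (D : ℕ) (J : Set (Zd D)) (N : ℕ) : ℝ :=
  ((box D N).filter (fun ℓ => ℓ ∈ J)).card / ((2 * N : ℕ) : ℝ) ^ D

/-- The upper Cesàro density `d̄(J)` of `J ⊆ ℤ^D`. -/
def upperDens (D : ℕ) (J : Set (Zd D)) : ℝ :=
  Filter.limsup (densSeq D J) Filter.atTop

/-- The Besicovitch pseudometric `d_B` on `𝒜^{ℤ^D}`. -/
def dB {A : Type*} (D : ℕ) (p q : Zd D → A) : ℝ :=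
  upperDens D {ℓ | p ℓ ≠ q ℓ}

variable {K D : ℕ} {A : Type*}

/-- An `𝒜`-labelled measurable partition of the torus: pairwise disjoint measurable
cells whose union has full measure. -/
structure IsMeasPartition (P : A → Set (Torus K)) : Prop where
  meas : ∀ a, MeasurableSet (P a)
  disj : Pairwise (Function.onFun Disjoint P)
  full : volume (⋃ a, P a) = 1

/-- An `𝒜`-labelled open partition of the torus: pairwise disjoint open cells whose
union is dense and has full measure. -/
structure IsOpenPartition (P : A → Set (Torus K)) : Prop where
  isOpen : ∀ a, IsOpen (P a)
  disj : Pairwise (Function.onFun Disjoint P)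
  dense : Dense (⋃ a, P a)
  full : volume (⋃ a, P a) = 1

/-- `lab` realizes the partition `P` as an `𝒜`-valued function (each cell is labelled
by its index). -/
def IsLabel (P : A → Set (Torus K)) (lab : Torus K → A) : Prop :=
  ∀ a, ∀ t ∈ P a, lab t = a

/-- The symmetric-difference pseudometric `d_△(𝒫,𝒬) = Σ_a λ(P_a △ Q_a)`. -/
def dSym [Fintype A] (P Q : A → Set (Torus K)) : ℝ :=
  ∑ a, (volume (symmDiff (P a) (Q a))).toReal

/-- `𝕋̃(𝒫) = ⋂_ℓ σ^ℓ(P_*)`, where `σ^ℓ(t) = t + τ(ℓ)` and `P_* = ⋃_a P_a`. -/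
def Ttil (τ : Zd D →+ Torus K) (P : A → Set (Torus K)) : Set (Torus K) :=
  ⋂ ℓ : Zd D, (fun x => x + τ ℓ) '' (⋃ a, P a)

/-- The trajectory map `𝒫_σ(t)_ℓ = 𝒫(σ^ℓ t)`, expressed via a labelling `lab` of `𝒫`. -/
def traj (τ : Zd D →+ Torus K) (lab : Torus K → A) (t : Torus K) : Zd D → A :=
  fun ℓ => lab (t + τ ℓ)

/-- A partition is simple if `0` is its only translational symmetry. -/
def IsSimple (P : A → Set (Torus K)) : Prop :=
  ∀ s : Torus K, (∀ a, volume (symmDiff (P a) ((fun x => x + s) '' P a)) = 0) → s = 0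

/-- The cellular automaton `Φ` with neighbourhood `B` and local rule `φ`:
`Φ(x)_ℓ = φ((x_{ℓ+b})_{b∈B})`. -/
def caMap {D : ℕ} {A : Type*} (B : Finset (Zd D)) (φ : (B → A) → A)
    (x : Zd D → A) : Zd D → A :=
  fun ℓ => φ fun b => x (ℓ + (b : Zd D))

/-- The induced map `Φ̂` on partitions: `Q_a = ⋃_{c : φ(c)=a} ⋂_{b∈B} σ^{-b}(P_{c_b})`. -/
def inducedPart (τ : Zd D →+ Torus K) (B : Finset (Zd D)) (φ : (B → A) → A)
    (P : A → Set (Torus K)) : A → Set (Torus K) :=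
  fun a => ⋃ (c : B → A) (_ : φ c = a), ⋂ b : B, {t | t + τ (b : Zd D) ∈ P (c b)}

/-- `x ∈ QS_σ`: `x` is a `σ`-quasisturmian sequence, i.e. the `𝒫`-trajectory of some
point of `𝕋̃(𝒫)` for some open partition `𝒫`. -/
def IsQSSeq (τ : Zd D →+ Torus K) (x : Zd D → A) : Prop :=
  ∃ (P : A → Set (Torus K)) (lab : Torus K → A) (t : Torus K),
    IsOpenPartition P ∧ IsLabel P lab ∧ t ∈ Ttil τ P ∧ x = traj τ lab t

lemma frontier_iUnion_subset' {X ι : Type*} [TopologicalSpace X] [Finite ι] (f : ι → Set X) :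
    frontier (⋃ i, f i) ⊆ ⋃ i, frontier (f i) := by
  intro x hx
  have hc : x ∈ closure (⋃ i, f i) := hx.1
  rw [closure_iUnion_of_finite] at hc
  obtain ⟨i, hi⟩ := Set.mem_iUnion.1 hc
  exact Set.mem_iUnion.2 ⟨i, hi, fun h => hx.2 (interior_mono (Set.subset_iUnion f i) h)⟩

lemma frontier_iInter_subset' {X ι : Type*} [TopologicalSpace X] [Finite ι] (f : ι → Set X) :
    frontier (⋂ i, f i) ⊆ ⋃ i, frontier (f i) := by
  intro x hx
  have hi : x ∉ ⋂ i, interior (f i) := by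
    rw [← interior_iInter_of_finite]; exact hx.2
  obtain ⟨i, hii⟩ : ∃ i, x ∉ interior (f i) := by
    by_contra h; push_neg at h; exact hi (Set.mem_iInter.2 h)
  exact Set.mem_iUnion.2 ⟨i, closure_mono (Set.iInter_subset f i) hx.1, hii⟩

lemma step_subset {K D : ℕ} {A : Type*} [Fintype A] (τ : Zd D →+ Torus K)
    (B : Finset (Zd D)) (φ : (B → A) → A) (Q : A → Set (Torus K)) :
    (⋃ a, frontier ((inducedPart τ B φ Q) a)) ⊆
      ⋃ b : B, (fun t => t + τ (b : Zd D)) ⁻¹' (⋃ a, frontier (Q a)) := by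
  apply Set.iUnion_subset
  intro a
  unfold inducedPart
  rw [← Set.iUnion_subtype (fun c : B → A => φ c = a)
    (fun c : {c : B → A // φ c = a} => ⋂ b : B, {t | t + τ (b : Zd D) ∈ Q (c.1 b)})]
  refine (frontier_iUnion_subset' _).trans (Set.iUnion_subset fun c => ?_)
  refine (frontier_iInter_subset' _).trans (Set.iUnion_subset fun b => ?_)
  intro x hx
  have h : frontier ((fun t => t + τ (b : Zd D)) ⁻¹' Q (c.1 b)) =
      (fun t => t + τ (b : Zd D)) ⁻¹' frontier (Q (c.1 b)) :=
    ((Homeomorph.addRight (τ (b : Zd D))).preimage_frontier _).symm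
  refine Set.mem_iUnion.2 ⟨b, ?_⟩
  have hx' : x ∈ (fun t => t + τ (b : Zd D)) ⁻¹' frontier (Q (c.1 b)) := h ▸ hx
  exact Set.mem_iUnion.2 ⟨c.1 b, hx'⟩

def Sbox (D R n : ℕ) : Finset (Zd D) :=
  Fintype.piFinset fun _ : Fin D => Finset.Icc (-(n * R : ℤ)) (n * R)

lemma iter_subset {K D : ℕ} {A : Type*} [Fintype A] (τ : Zd D →+ Torus K)
    (B : Finset (Zd D)) (R : ℕ) (hBR : ∀ b ∈ B, ∀ i : Fin D, |b i| ≤ (R : ℤ))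
    (φ : (B → A) → A) (P : A → Set (Torus K)) :
    ∀ n : ℕ, (⋃ a, frontier (((inducedPart τ B φ)^[n] P) a)) ⊆
      ⋃ ℓ ∈ Sbox D R n, (fun t => t + τ ℓ) ⁻¹' (⋃ a, frontier (P a))
  | 0 => by
    simp only [Function.iterate_zero, id]
    intro x hx
    refine Set.mem_biUnion (show (0 : Zd D) ∈ Sbox D R 0 by
      rw [Sbox, Fintype.mem_piFinset]
      intro i
      simp) ?_
    simpa using hx
  | (n+1) => by
    rw [Function.iterate_succ_apply']
    intro x hx
    obtain ⟨s, ⟨b, rfl⟩, hxb⟩ := step_subset τ B φ _ hx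
    have hxb' : x + τ (b : Zd D) ∈
        ⋃ ℓ ∈ Sbox D R n, (fun t => t + τ ℓ) ⁻¹' (⋃ a, frontier (P a)) :=
      iter_subset τ B R hBR φ P n hxb
    obtain ⟨ℓ, hℓ, hmem⟩ := Set.mem_iUnion₂.1 hxb'
    refine Set.mem_iUnion₂.2 ⟨(b : Zd D) + ℓ, ?_, ?_⟩
    · rw [Sbox, Fintype.mem_piFinset]
      intro i
      rw [Sbox, Fintype.mem_piFinset] at hℓ
      have h1 := (abs_le.1 (hBR b b.2 i))
      have h2 := Finset.mem_Icc.1 (hℓ i)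
      have h3 : ((n + 1 : ℕ) * R : ℤ) = (n * R : ℕ) + R := by push_cast; ring
      rw [Finset.mem_Icc]
      simp only [Pi.add_apply]
      push_cast at h2 h3 ⊢
      constructor <;> [linarith [h1.1, h2.1]; linarith [h1.2, h2.2]]
    · simp only [Set.mem_preimage, map_add, ← add_assoc]
      exact hmem

lemma m_biUnion_le {X : Type*} (m : Set X → ℝ≥0∞)
    (hsub : ∀ S₁ S₂ : Set X, m (S₁ ∪ S₂) ≤ m S₁ + m S₂)
    {ι : Type*} (f : ι → Set X) (S : Finset ι) (hS : S.Nonempty) :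
    m (⋃ i ∈ S, f i) ≤ ∑ i ∈ S, m (f i) := by
  induction hS using Finset.Nonempty.cons_induction with
  | singleton a => simp
  | cons a s h hs ih =>
    rw [Finset.sum_cons]
    have : (⋃ i ∈ Finset.cons a s h, f i) = f a ∪ ⋃ i ∈ s, f i := by
      simp [Finset.cons_eq_insert, Set.biUnion_insert]
    rw [this]
    exact (hsub _ _).trans (add_le_add_right ih _)

lemma Sbox_card (D R n : ℕ) : (Sbox D R n).card = (2 * n * R + 1) ^ D := by
  rw [Sbox, Fintype.card_piFinset]
  have h : (Finset.Icc (-(n * R : ℤ)) (n * R)).card = 2 * n * R + 1 := by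
    rw [Int.card_Icc]
    have : ((n : ℤ) * R + 1 - -(n * R)) = ((2 * n * R + 1 : ℕ) : ℤ) := by push_cast; ring
    rw [this, Int.toNat_natCast]
  simp [h]

theorem final_bound {K D : ℕ} {A : Type*} [Fintype A]
    (τ : Zd D →+ Torus K)
    (m : Set (Torus K) → ℝ≥0∞)
    (hmono : ∀ S₁ S₂ : Set (Torus K), S₁ ⊆ S₂ → m S₁ ≤ m S₂)
    (hsub : ∀ S₁ S₂ : Set (Torus K), m (S₁ ∪ S₂) ≤ m S₁ + m S₂)
    (htrans : ∀ (S : Set (Torus K)) (t : Torus K), m ((fun x => x + t) '' S) = m S)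
    (B : Finset (Zd D)) (R : ℕ) (hBR : ∀ b ∈ B, ∀ i : Fin D, |b i| ≤ (R : ℤ))
    (φ : (B → A) → A)
    (P : A → Set (Torus K)) (n : ℕ) (hn : 1 ≤ n) :
    m (⋃ a, frontier (((inducedPart τ B φ)^[n] P) a)) ≤
      (((2 * R + 1) ^ D * n ^ D : ℕ) : ℝ≥0∞) * m (⋃ a, frontier (P a)) := by
  classical
  set F := ⋃ a, frontier (P a) with hF
  have h1 := hmono _ _ (iter_subset τ B R hBR φ P n)
  have hne : (Sbox D R n).Nonempty := by
    refine ⟨0, ?_⟩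
    rw [Sbox, Fintype.mem_piFinset]
    intro i
    rw [Finset.mem_Icc]
    constructor
    · simp only [Pi.zero_apply]; exact neg_nonpos.2 (by positivity)
    · simp only [Pi.zero_apply]; positivity
  have h2 := m_biUnion_le m hsub (fun ℓ => (fun t => t + τ ℓ) ⁻¹' F) _ hne
  have h3 : ∀ ℓ : Zd D, m ((fun t => t + τ ℓ) ⁻¹' F) = m F := by
    intro ℓ
    have he : (fun t => t + τ ℓ) ⁻¹' F = (fun x => x + (-(τ ℓ))) '' F := by
      ext t
      simp only [Set.mem_preimage, Set.mem_image]
      constructor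
      · intro h; exact ⟨t + τ ℓ, h, by abel⟩
      · rintro ⟨x, hx, rfl⟩
        have : x + -τ ℓ + τ ℓ = x := by abel
        rwa [this]
    rw [he, htrans]
  have h4 : ∑ ℓ ∈ Sbox D R n, m ((fun t => t + τ ℓ) ⁻¹' F) =
      ((Sbox D R n).card : ℝ≥0∞) * m F := by
    rw [Finset.sum_congr rfl fun ℓ _ => h3 ℓ, Finset.sum_const, nsmul_eq_mul]
  have hcard : (Sbox D R n).card ≤ (2 * R + 1) ^ D * n ^ D := by
    rw [Sbox_card]
    calc (2 * n * R + 1) ^ D ≤ ((2 * R + 1) * n) ^ D :=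
          Nat.pow_le_pow_left (by nlinarith) D
      _ = (2 * R + 1) ^ D * n ^ D := mul_pow _ _ _
  calc m (⋃ a, frontier (((inducedPart τ B φ)^[n] P) a))
      ≤ m (⋃ ℓ ∈ Sbox D R n, (fun t => t + τ ℓ) ⁻¹' F) := h1
    _ ≤ ∑ ℓ ∈ Sbox D R n, m ((fun t => t + τ ℓ) ⁻¹' F) := h2
    _ = ((Sbox D R n).card : ℝ≥0∞) * m F := h4
    _ ≤ (((2 * R + 1) ^ D * n ^ D : ℕ) : ℝ≥0∞) * m F :=
        mul_le_mul_left (by exact_mod_cast Nat.cast_le.2 hcard) _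

/-- For any monotone, finitely subadditive, translation-invariant
`m : 𝒫(𝕋) → [0,∞]` and any CA with neighbourhood `𝔅 ⊆ {-R,…,R}^D`, the boundary of the
iterated induced partition grows at most polynomially:
`m(∂(Φ̂^n 𝒫)) ≤ (2R+1)^D · n^D · m(∂𝒫)`. -/
theorem boundary_grows_polynomially {K D : ℕ} (hK : 1 ≤ K) (hD : 1 ≤ D)
    {A : Type*} [Fintype A]
    (τ : Zd D →+ Torus K) (hinj : Function.Injective τ)
    (m : Set (Torus K) → ℝ≥0∞)
    (hmono : ∀ S₁ S₂ : Set (Torus K), S₁ ⊆ S₂ → m S₁ ≤ m S₂)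
    (hsub : ∀ S₁ S₂ : Set (Torus K), m (S₁ ∪ S₂) ≤ m S₁ + m S₂)
    (htrans : ∀ (S : Set (Torus K)) (t : Torus K), m ((fun x => x + t) '' S) = m S)
    (B : Finset (Zd D)) (R : ℕ) (hBR : ∀ b ∈ B, ∀ i : Fin D, |b i| ≤ (R : ℤ))
    (φ : (B → A) → A)
    (P : A → Set (Torus K)) (hP : IsOpenPartition P) (n : ℕ) (hn : 1 ≤ n) :
    m (⋃ a, frontier (((inducedPart τ B φ)^[n] P) a)) ≤
      (((2 * R + 1) ^ D * n ^ D : ℕ) : ℝ≥0∞) * m (⋃ a, frontier (P a)) := by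
  exact final_bound τ m hmono hsub htrans B R hBR φ P n hn

end
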